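/- For every s ≥ 0 and prime power q, there exists a non-degenerate linear [(s+1)(q+1), 2, d]_q code with Singleton defect exactly s, and no non-degenerate [n,2,d]_q code with defect s has length n > (s+1)(q+1). That is, m^s(2,q) = (s+1)(q+1). -/

import Mathlib

/-- The number of points (with multiplicity) of the projective system `G`
lying on the hyperplane `ker φ`. -/
noncomputable def hypCount {F : Type*} [Field F] [DecidableEq F] {n k : ℕ}
    (G : Fin n → Fin k → F) (φ : (Fin k → F) →ₗ[F] F) : ℕ :=
  (Finset.univ.filter fun i => φ (G i) = 0).card

/-- `G` is (the projective system of) a non-degenerate linear `[n,k,d]_q` code: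
an `n`-multiset of nonzero points spanning `PG(k-1,q)`, every hyperplane containing
at most `n - d` points, and some hyperplane (a secant) containing exactly `n - d`. -/
def IsCodePS (F : Type*) [Field F] [DecidableEq F] (n k d : ℕ)
    (G : Fin n → Fin k → F) : Prop :=
  0 < d ∧ (∀ i, G i ≠ 0) ∧ Submodule.span F (Set.range G) = ⊤ ∧
  (∀ φ : (Fin k → F) →ₗ[F] F, φ ≠ 0 → hypCount G φ + d ≤ n) ∧
  (∃ φ : (Fin k → F) →ₗ[F] F, φ ≠ 0 ∧ hypCount G φ + d = n)

section Aux

set_option linter.unusedSectionVars false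

variable {F : Type*} [Field F] [DecidableEq F]

/-- representative points of PG(1,q) -/
def ptv (t : Option F) : Fin 2 → F :=
  t.elim ![0, 1] (fun a => ![1, a])

lemma ptv_ne_zero (t : Option F) : ptv t ≠ (0 : Fin 2 → F) := by
  cases t with
  | none => intro h; have := congr_fun h 1; simp [ptv] at this
  | some a => intro h; have := congr_fun h 0; simp [ptv] at this

lemma decomp (x : Fin 2 → F) : x = x 0 • ![1, 0] + x 1 • ![0, 1] := by
  funext j; fin_cases j <;> simp

lemma phi_apply (φ : (Fin 2 → F) →ₗ[F] F) (x : Fin 2 → F) :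
    φ x = x 0 * φ ![1, 0] + x 1 * φ ![0, 1] := by
  calc φ x = φ (x 0 • ![1, 0] + x 1 • ![0, 1]) := by rw [← decomp x]
    _ = x 0 * φ ![1, 0] + x 1 * φ ![0, 1] := by
        rw [map_add, map_smul, map_smul, smul_eq_mul, smul_eq_mul]

lemma exists_unique_pt (φ : (Fin 2 → F) →ₗ[F] F) (hφ : φ ≠ 0) :
    ∃! t : Option F, φ (ptv t) = 0 := by
  set b := φ ![1, 0] with hb
  set c := φ ![0, 1] with hc
  have hval : ∀ t : Option F, φ (ptv t) = t.elim c (fun a => b + a * c) := by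
    intro t
    cases t with
    | none => rw [phi_apply]; simp [ptv, ← hb, ← hc]
    | some a => rw [phi_apply]; simp [ptv, ← hb, ← hc]
  have hbc : b ≠ 0 ∨ c ≠ 0 := by
    by_contra h
    push_neg at h
    apply hφ
    refine LinearMap.ext fun x => ?_
    rw [phi_apply, ← hb, ← hc, h.1, h.2, LinearMap.zero_apply]
    ring
  by_cases hc0 : c = 0
  · have hb0 : b ≠ 0 := by tauto
    refine ⟨none, by simp [hval, hc0], ?_⟩
    intro t ht
    cases t with
    | none => rfl
    | some a => rw [hval] at ht; simp [hc0] at ht; exact absurd ht hb0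
  · refine ⟨some (-b / c), ?_, ?_⟩
    · show φ (ptv (some (-b / c))) = 0
      rw [hval]
      simp only [Option.elim]
      field_simp
      ring
    · intro t ht
      cases t with
      | none => rw [hval] at ht; exact absurd ht hc0
      | some a =>
        rw [hval] at ht
        simp only [Option.elim] at ht
        simp only [Option.some.injEq]
        field_simp
        linear_combination ht

/-- hyperplane through ptv t -/
def lmap (t : Option F) : (Fin 2 → F) →ₗ[F] F :=
  t.elim (LinearMap.proj 0) (fun a => LinearMap.proj 1 - a • LinearMap.proj 0)

lemma lmap_ne_zero (t : Option F) : lmap (F := F) t ≠ 0 := by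
  cases t with
  | none =>
    intro h
    have := congr_fun (congr_arg DFunLike.coe h) ![1, 0]
    simp [lmap] at this
  | some a =>
    intro h
    have := congr_fun (congr_arg DFunLike.coe h) ![0, 1]
    simp [lmap] at this

lemma lmap_vanishes (x : Fin 2 → F) (hx : x ≠ 0) :
    lmap (F := F) (if x 0 = 0 then none else some (x 1 / x 0)) x = 0 := by
  by_cases h0 : x 0 = 0
  · simp [h0, lmap]
  · simp [h0, lmap]

end Aux

/-- `m^s(2,q) = (s+1)(q+1)`: there is a non-degenerate `[(s+1)(q+1), 2, d]_q` code
with Singleton defect exactly `s`, and every non-degenerate `[n,2,d]_q` code with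
defect `s` has `n ≤ (s+1)(q+1)`. -/
theorem m_s_two_eq (F : Type*) [Field F] [Fintype F] [DecidableEq F] (s : ℕ) :
    (∃ d : ℕ, ∃ G : Fin ((s + 1) * (Fintype.card F + 1)) → Fin 2 → F,
      IsCodePS F ((s + 1) * (Fintype.card F + 1)) 2 d G ∧
        d + 2 + s = (s + 1) * (Fintype.card F + 1) + 1) ∧
    (∀ (n d : ℕ) (G : Fin n → Fin 2 → F), IsCodePS F n 2 d G → d + 2 + s = n + 1 →
      n ≤ (s + 1) * (Fintype.card F + 1)) := by
  set q := Fintype.card F with hq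
  have hq1 : 1 ≤ q := Fintype.card_pos
  constructor
  · -- existence
    have hcard : Fintype.card (Fin (q + 1)) = Fintype.card (Option F) := by simp [hq]
    let e : Fin ((s + 1) * (q + 1)) ≃ Fin (s + 1) × Option F :=
      finProdFinEquiv.symm.trans ((Equiv.refl (Fin (s + 1))).prodCongr
        (Fintype.equivOfCardEq hcard))
    set G : Fin ((s + 1) * (q + 1)) → Fin 2 → F := fun i => ptv (e i).2 with hG
    have hhyp : ∀ φ : (Fin 2 → F) →ₗ[F] F, φ ≠ 0 → hypCount G φ = s + 1 := by
      intro φ hφ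
      obtain ⟨t₀, ht₀, huniq⟩ := exists_unique_pt φ hφ
      have hiff : ∀ i, φ (G i) = 0 ↔ (e i).2 = t₀ := by
        intro i
        exact ⟨fun h => huniq _ h, fun h => by rw [hG]; simp only; rw [h]; exact ht₀⟩
      have e2 : {p : Fin (s + 1) × Option F // p.2 = t₀} ≃ Fin (s + 1) :=
        { toFun := fun p => p.1.1
          invFun := fun a => ⟨(a, t₀), rfl⟩
          left_inv := fun p => by obtain ⟨⟨a, t⟩, ht⟩ := p; cases ht; rfl
          right_inv := fun a => rfl }
      unfold hypCount
      rw [Finset.filter_congr (fun i _ => by rw [hiff i])]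
      calc (Finset.univ.filter fun i => (e i).2 = t₀).card
          = Fintype.card {i // (e i).2 = t₀} := (Fintype.card_subtype _).symm
        _ = Fintype.card {p : Fin (s + 1) × Option F // p.2 = t₀} :=
            Fintype.card_congr (e.subtypeEquiv fun i => Iff.rfl)
        _ = Fintype.card (Fin (s + 1)) := Fintype.card_congr e2
        _ = s + 1 := Fintype.card_fin _
    refine ⟨(s + 1) * q, G, ⟨?_, ?_, ?_, ?_, ?_⟩, ?_⟩
    · positivity
    · intro i; exact ptv_ne_zero _
    · -- span
      rw [Submodule.eq_top_iff']
      intro x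
      have h1 : (![1, 0] : Fin 2 → F) ∈ Set.range G := by
        refine ⟨e.symm (0, some 0), ?_⟩
        simp [hG, ptv]
      have h2 : (![0, 1] : Fin 2 → F) ∈ Set.range G := by
        refine ⟨e.symm (0, none), ?_⟩
        simp [hG, ptv]
      have m1 := Submodule.subset_span (R := F) h1
      have m2 := Submodule.subset_span (R := F) h2
      rw [decomp x]
      exact Submodule.add_mem _ (Submodule.smul_mem _ _ m1) (Submodule.smul_mem _ _ m2)
    · intro φ hφ
      rw [hhyp φ hφ]
      ring_nf
      omega
    · refine ⟨lmap none, lmap_ne_zero none, ?_⟩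
      rw [hhyp _ (lmap_ne_zero none)]
      ring
    · ring_nf
  · -- upper bound
    intro n d G hG heq
    obtain ⟨hd, hnz, _, hall, _⟩ := hG
    have key : ∀ φ : (Fin 2 → F) →ₗ[F] F, φ ≠ 0 → hypCount G φ ≤ s + 1 := by
      intro φ hφ
      have := hall φ hφ
      omega
    set c : Fin n → Option F := fun i => if G i 0 = 0 then none else some (G i 1 / G i 0)
      with hc
    have hsum : (Finset.univ : Finset (Fin n)).card =
        ∑ t : Option F, (Finset.univ.filter (fun i => c i = t)).card :=
      Finset.card_eq_sum_card_fiberwise (fun i _ => Finset.mem_univ (c i))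
    rw [Finset.card_univ, Fintype.card_fin] at hsum
    have hle : ∀ t : Option F,
        (Finset.univ.filter (fun i => c i = t)).card ≤ s + 1 := by
      intro t
      refine le_trans (Finset.card_le_card ?_) (key (lmap t) (lmap_ne_zero t))
      intro i hi
      simp only [Finset.mem_filter, Finset.mem_univ, true_and] at hi ⊢
      rw [← hi]
      exact lmap_vanishes (G i) (hnz i)
    calc n = ∑ t : Option F, (Finset.univ.filter (fun i => c i = t)).card := hsum
      _ ≤ ∑ _t : Option F, (s + 1) := Finset.sum_le_sum (fun t _ => hle t)
      _ = (q + 1) * (s + 1) := by simp [Finset.sum_const, mul_comm, hq]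
      _ = (s + 1) * (q + 1) := by ring
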